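/- Consider the operator Riccati equation T_t + T² − V T = U, where U = Σ_{i=0}^{2k} 𝔲_i D^i and V = Σ_{i=0}^{k-1} 𝔳_i D^i are differential operators over a differential ring and T = Σ_{j≤k} τ_j D^j is a formal pseudo-differential series of order k. Then the leading coefficient of any solution satisfies τ_k² = 𝔲_{2k}, and for each fixed choice of square root τ_k of 𝔲_{2k} (assumed invertible), each subsequent coefficient τ_j (j < k) is uniquely determined by an equation of the form 2 τ_k τ_j = c_j, where c_j is a differential expression in τ_k, …, τ_{j+1} and the coefficients of U and V. In particular the equation has exactly two solutions of order k, corresponding to the two square roots of 𝔲_{2k}. -/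

import Mathlib

/-!
Formal pseudo-differential series over a commutative differential ring `(A, d)`.
A series `X = ∑_{i ≤ N} a_i D^i` is represented by its coefficient function
`ℤ → A` (the coefficient of `D^i`), with support bounded above.
-/

noncomputable section

/-- Generalized binomial coefficient `C(n, k)` for an integer `n`. -/
def gbinom (n : ℤ) (k : ℕ) : ℤ := Polynomial.eval n (descPochhammer ℤ k) / (k.factorial : ℤ)

variable {A : Type*} [CommRing A]

/-- Support of a coefficient function is bounded above: genuine pseudo-differential series. -/
def PDSBdd (X : ℤ → A) : Prop := ∃ N : ℤ, ∀ i : ℤ, N < i → X i = 0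

/-- Product of pseudo-differential series, induced by the extended Leibniz rule
`D^i ∘ a = ∑_{k ≥ 0} C(i,k) d^k(a) D^{i-k}`. -/
def pdsMul (d : A → A) (X Y : ℤ → A) : ℤ → A := fun n =>
  ∑ᶠ p : ℤ × ℕ, gbinom p.1 p.2 • (X p.1 * d^[p.2] (Y (n - p.1 + p.2)))

/-- The unit series `1 = D^0`. -/
def pdsOne : ℤ → A := fun n => if n = 0 then 1 else 0

/-- Powers of a pseudo-differential series. -/
def pdsPow (d : A → A) (X : ℤ → A) : ℕ → ℤ → A
  | 0 => pdsOne
  | n + 1 => pdsMul d (pdsPow d X n) X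

/-- Formal conjugate `X⁺ = ∑ (−D)^i ∘ a_i`. -/
def pdsConj (d : A → A) (X : ℤ → A) : ℤ → A := fun n =>
  ∑ᶠ k : ℕ, (((-1 : ℤˣ) ^ (n + (k : ℤ)) : ℤˣ) : ℤ) •
    (gbinom (n + k) k • d^[k] (X (n + k)))

/-- The residue: the coefficient of `D^{-1}`. -/
def pdsRes (X : ℤ → A) : A := X (-1)

lemma gbinom_zero' (n : ℤ) : gbinom n 0 = 1 := by simp [gbinom]

lemma iterate_zero_of (d : A → A) (hd : d 0 = 0) (p : ℕ) : d^[p] 0 = 0 :=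
  Function.iterate_fixed hd p

lemma pdsMul_eq_sum (d : A → A) (hd : d 0 = 0) (X Y : ℤ → A) (a b : ℤ)
    (hX : ∀ i, a < i → X i = 0) (hY : ∀ i, b < i → Y i = 0) (n : ℤ) :
    pdsMul d X Y n =
      ∑ p ∈ Finset.Icc (n - b) a ×ˢ Finset.Icc 0 ((a + b - n).toNat),
        gbinom p.1 p.2 • (X p.1 * d^[p.2] (Y (n - p.1 + p.2))) := by
  apply finsum_eq_finset_sum_of_support_subset
  rintro ⟨p1, p2⟩ hp
  simp only [Function.mem_support] at hp
  simp only [Finset.coe_product, Set.mem_prod, Finset.mem_coe, Finset.mem_Icc]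
  by_contra hmem
  apply hp
  by_cases h1 : X p1 = 0
  · simp [h1]
  by_cases h2 : Y (n - p1 + p2) = 0
  · simp [h2, iterate_zero_of d hd]
  · exfalso
    have hb : n - p1 + p2 ≤ b := le_of_not_gt fun hh => h2 (hY _ hh)
    have ha : p1 ≤ a := le_of_not_gt fun hh => h1 (hX _ hh)
    exact hmem ⟨⟨by omega, ha⟩, ⟨by omega, by omega⟩⟩

/-- The Riccati operator expression, coefficientwise. -/
def Fop (D Dt : Derivation ℤ A A) (V P : ℤ → A) : ℤ → A := fun n =>
  Dt (P n) + pdsMul (⇑D) P P n - pdsMul (⇑D) V P n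

lemma F_diff (D Dt : Derivation ℤ A A) (k : ℕ) (hk : 1 ≤ k) (V : ℤ → A)
    (hV : ∀ i : ℤ, ((k:ℤ) - 1 < i) → V i = 0)
    (P Q : ℤ → A) (hP : ∀ j : ℤ, (k:ℤ) < j → P j = 0) (hQ : ∀ j : ℤ, (k:ℤ) < j → Q j = 0)
    (m : ℤ) (hm : m ≤ (k:ℤ) - 1) (hag : ∀ j : ℤ, m < j → P j = Q j) :
    Fop D Dt V P ((k:ℤ) + m) - Fop D Dt V Q ((k:ℤ) + m)
      = (P (k:ℤ) + P (k:ℤ)) * (P m - Q m) := by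
  set n := (k:ℤ) + m with hn
  have hDzero : (⇑D : A → A) 0 = 0 := map_zero D
  have hPn : P n = Q n := hag n (by omega)
  have hVpart : pdsMul (⇑D) V P n = pdsMul (⇑D) V Q n := by
    rw [pdsMul_eq_sum (⇑D) hDzero V P ((k:ℤ)-1) k hV hP n,
        pdsMul_eq_sum (⇑D) hDzero V Q ((k:ℤ)-1) k hV hQ n]
    apply Finset.sum_congr rfl
    rintro ⟨p1, p2⟩ hmem
    simp only [Finset.mem_product, Finset.mem_Icc] at hmem
    rw [hag (n - p1 + p2) (by omega)]
  have hmul : pdsMul (⇑D) P P n - pdsMul (⇑D) Q Q n = (P (k:ℤ) + P (k:ℤ)) * (P m - Q m) := by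
    rw [pdsMul_eq_sum (⇑D) hDzero P P k k hP hP n,
        pdsMul_eq_sum (⇑D) hDzero Q Q k k hQ hQ n, ← Finset.sum_sub_distrib]
    have hpair : ({(m, 0), ((k:ℤ), 0)} : Finset (ℤ × ℕ)) ⊆
        Finset.Icc (n - k) (k:ℤ) ×ˢ Finset.Icc 0 (((k:ℤ) + k - n).toNat) := by
      intro p hp
      simp only [Finset.mem_insert, Finset.mem_singleton] at hp
      rcases hp with h | h <;> subst h <;>
        simp only [Finset.mem_product, Finset.mem_Icc] <;> omega
    rw [← Finset.sum_subset hpair ?_]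
    · have hne : ((m, 0) : ℤ × ℕ) ≠ ((k:ℤ), 0) := by
        simp only [ne_eq, Prod.mk.injEq, not_and]
        intro h; omega
      rw [Finset.sum_pair hne]
      simp only [gbinom_zero', one_smul, Function.iterate_zero, id_eq, Nat.cast_zero, add_zero]
      have e1 : n - m = (k:ℤ) := by omega
      have e2 : n - (k:ℤ) = m := by omega
      rw [e1, e2, ← hag (k:ℤ) (by omega)]
      ring
    · rintro ⟨p1, p2⟩ hmem hnp
      simp only [Finset.mem_product, Finset.mem_Icc] at hmem
      simp only [Finset.mem_insert, Finset.mem_singleton, Prod.mk.injEq, not_or, not_and] at hnp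
      obtain ⟨h1, h2⟩ := hnp
      by_cases hc : (k:ℤ) < n - p1 + p2
      · simp [hP _ hc, hQ _ hc, iterate_zero_of _ hDzero]
      · have hpm : p1 ≠ m := by
          intro hpe
          exact (h1 hpe) (by omega)
        have hj : m < n - p1 + p2 := by
          by_contra hle
          have hpk : p1 = (k:ℤ) := by omega
          exact (h2 hpk) (by omega)
        rw [hag p1 (by omega), hag _ hj]
        exact sub_self _
  show Dt (P n) + pdsMul (⇑D) P P n - pdsMul (⇑D) V P n
      - (Dt (Q n) + pdsMul (⇑D) Q Q n - pdsMul (⇑D) V Q n) = _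
  rw [hPn, hVpart]
  calc Dt (Q n) + pdsMul (⇑D) P P n - pdsMul (⇑D) V Q n
      - (Dt (Q n) + pdsMul (⇑D) Q Q n - pdsMul (⇑D) V Q n)
      = pdsMul (⇑D) P P n - pdsMul (⇑D) Q Q n := by ring
    _ = _ := hmul
lemma F_local (D Dt : Derivation ℤ A A) (k : ℕ) (V : ℤ → A)
    (hV : ∀ i : ℤ, ((k:ℤ) - 1 < i) → V i = 0)
    (P Q : ℤ → A) (hP : ∀ j : ℤ, (k:ℤ) < j → P j = 0) (hQ : ∀ j : ℤ, (k:ℤ) < j → Q j = 0)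
    (n : ℤ) (hag : ∀ j : ℤ, n - k ≤ j → P j = Q j) :
    Fop D Dt V P n = Fop D Dt V Q n := by
  have hDzero : (⇑D : A → A) 0 = 0 := map_zero D
  show Dt (P n) + pdsMul (⇑D) P P n - pdsMul (⇑D) V P n
      = Dt (Q n) + pdsMul (⇑D) Q Q n - pdsMul (⇑D) V Q n
  rw [hag n (by omega),
      pdsMul_eq_sum (⇑D) hDzero P P k k hP hP n,
      pdsMul_eq_sum (⇑D) hDzero Q Q k k hQ hQ n,
      pdsMul_eq_sum (⇑D) hDzero V P ((k:ℤ)-1) k hV hP n,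
      pdsMul_eq_sum (⇑D) hDzero V Q ((k:ℤ)-1) k hV hQ n]
  congr 1
  · congr 1
    apply Finset.sum_congr rfl
    rintro ⟨p1, p2⟩ hmem
    simp only [Finset.mem_product, Finset.mem_Icc] at hmem
    rw [hag p1 (by omega), hag (n - p1 + p2) (by omega)]
  · apply Finset.sum_congr rfl
    rintro ⟨p1, p2⟩ hmem
    simp only [Finset.mem_product, Finset.mem_Icc] at hmem
    rw [hag (n - p1 + p2) (by omega)]

lemma F_top (D Dt : Derivation ℤ A A) (k : ℕ) (hk : 1 ≤ k) (V : ℤ → A)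
    (hV : ∀ i : ℤ, ((k:ℤ) - 1 < i) → V i = 0)
    (T : ℤ → A) (hT : ∀ j : ℤ, (k:ℤ) < j → T j = 0) :
    Fop D Dt V T (2 * (k:ℤ)) = T k * T k := by
  have hDzero : (⇑D : A → A) 0 = 0 := map_zero D
  show Dt (T (2*(k:ℤ))) + pdsMul (⇑D) T T (2*(k:ℤ)) - pdsMul (⇑D) V T (2*(k:ℤ)) = _
  rw [hT (2*(k:ℤ)) (by omega), map_zero,
      pdsMul_eq_sum (⇑D) hDzero T T k k hT hT (2*(k:ℤ)),
      pdsMul_eq_sum (⇑D) hDzero V T ((k:ℤ)-1) k hV hT (2*(k:ℤ))]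
  have h1 : Finset.Icc (2*(k:ℤ) - k) ((k:ℤ)-1) = ∅ := Finset.Icc_eq_empty (by omega)
  have h2 : Finset.Icc (2*(k:ℤ) - k) (k:ℤ) = {(k:ℤ)} := by
    rw [show 2*(k:ℤ) - k = (k:ℤ) by ring, Finset.Icc_self]
  have h3 : ((k:ℤ) + k - 2*(k:ℤ)).toNat = 0 := by omega
  rw [h1, h2, h3, Finset.Icc_self, Finset.empty_product, Finset.sum_empty,
      Finset.singleton_product_singleton, Finset.sum_singleton]
  simp only [gbinom_zero', one_smul, Function.iterate_zero, id_eq, Nat.cast_zero, add_zero]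
  rw [show 2*(k:ℤ) - k = (k:ℤ) by ring]
  ring

lemma F_high (D Dt : Derivation ℤ A A) (k : ℕ) (V : ℤ → A)
    (hV : ∀ i : ℤ, ((k:ℤ) - 1 < i) → V i = 0)
    (T : ℤ → A) (hT : ∀ j : ℤ, (k:ℤ) < j → T j = 0)
    (n : ℤ) (hn : 2 * (k:ℤ) < n) :
    Fop D Dt V T n = 0 := by
  have hDzero : (⇑D : A → A) 0 = 0 := map_zero D
  show Dt (T n) + pdsMul (⇑D) T T n - pdsMul (⇑D) V T n = 0
  rw [hT n (by omega), map_zero,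
      pdsMul_eq_sum (⇑D) hDzero T T k k hT hT n,
      pdsMul_eq_sum (⇑D) hDzero V T ((k:ℤ)-1) k hV hT n,
      Finset.Icc_eq_empty (show ¬ (n - (k:ℤ) ≤ (k:ℤ)) by omega),
      Finset.Icc_eq_empty (show ¬ (n - (k:ℤ) ≤ (k:ℤ)-1) by omega),
      Finset.empty_product, Finset.sum_empty, Finset.empty_product, Finset.sum_empty]
  ring

/-- The recursive approximation sequence for the solution. -/
def seqN (D Dt : Derivation ℤ A A) (V U : ℤ → A) (k : ℕ) (τ y : A) : ℕ → ℤ → A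
  | 0 => fun j => if j = (k:ℤ) then τ else 0
  | (i+1) =>
      Function.update (seqN D Dt V U k τ y i) ((k:ℤ) - ((i:ℤ)+1))
        (seqN D Dt V U k τ y i ((k:ℤ) - ((i:ℤ)+1)) +
          y * (U (2*(k:ℤ) - ((i:ℤ)+1)) - Fop D Dt V (seqN D Dt V U k τ y i) (2*(k:ℤ) - ((i:ℤ)+1))))

variable (D Dt : Derivation ℤ A A) (V U : ℤ → A) (k : ℕ) (τ y : A)

lemma seqN_bdd : ∀ i : ℕ, ∀ j : ℤ, (k:ℤ) < j → seqN D Dt V U k τ y i j = 0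
  | 0, j, hj => if_neg (by omega)
  | (i+1), j, hj => by
      rw [seqN, Function.update_of_ne (by omega)]
      exact seqN_bdd i j hj

lemma seqN_top : ∀ i : ℕ, seqN D Dt V U k τ y i (k:ℤ) = τ
  | 0 => if_pos rfl
  | (i+1) => by
      rw [seqN, Function.update_of_ne (by omega)]
      exact seqN_top i

lemma seqN_stab : ∀ (i l : ℕ) (j : ℤ), (k:ℤ) - i ≤ j →
    seqN D Dt V U k τ y (i + l) j = seqN D Dt V U k τ y i j
  | i, 0, j, h => rfl
  | i, (l+1), j, h => by
      rw [show i + (l+1) = (i+l)+1 from rfl, seqN, Function.update_of_ne (by omega)]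
      exact seqN_stab i l j h

/-- The solution. -/
def Tsol : ℤ → A :=
  fun j => if (k:ℤ) < j then 0 else seqN D Dt V U k τ y ((k:ℤ) - j).toNat j

lemma Tsol_agree (i : ℕ) (j : ℤ) (h : (k:ℤ) - i ≤ j) :
    Tsol D Dt V U k τ y j = seqN D Dt V U k τ y i j := by
  unfold Tsol
  by_cases hj : (k:ℤ) < j
  · rw [if_pos hj, seqN_bdd D Dt V U k τ y i j hj]
  · rw [if_neg hj]
    have h1 : ((k:ℤ) - j).toNat ≤ i := by omega
    obtain ⟨l, rfl⟩ := Nat.exists_eq_add_of_le h1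
    exact (seqN_stab D Dt V U k τ y _ l j (by omega)).symm

/-- the operator Riccati equation `T_t + T² − V T = U`, with
`U = ∑_{i=0}^{2k} 𝔲_i D^i`, `V = ∑_{i=0}^{k-1} 𝔳_i D^i` and `T` a pseudo-differential
series of order `k`.  The leading coefficient of any solution satisfies
`τ_k² = 𝔲_{2k}`, and for each choice `τ` of a square root of the (invertible)
leading coefficient `𝔲_{2k}` there is exactly one solution of order `k` with
leading coefficient `τ`; in particular the equation has exactly two solutions
of order `k`, one for each square root. -/
theorem riccati_leading_and_unique_solution
    (D Dt : Derivation ℤ A A) (k : ℕ) (hk : 1 ≤ k)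
    (U V : ℤ → A)
    (hU : ∀ i : ℤ, (i < 0 ∨ 2 * (k : ℤ) < i) → U i = 0)
    (hV : ∀ i : ℤ, (i < 0 ∨ (k : ℤ) - 1 < i) → V i = 0)
    (hu : IsUnit (U (2 * (k : ℤ)))) (h2 : IsUnit (2 : A))
    (τ : A) (hτ : τ * τ = U (2 * (k : ℤ))) :
    (∀ T : ℤ → A, (∀ j : ℤ, (k : ℤ) < j → T j = 0) →
        ((fun n => Dt (T n)) + pdsMul (⇑D) T T - pdsMul (⇑D) V T = U) →
        T k * T k = U (2 * (k : ℤ))) ∧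
    (∃! T : ℤ → A, (∀ j : ℤ, (k : ℤ) < j → T j = 0) ∧ T k = τ ∧
        ((fun n => Dt (T n)) + pdsMul (⇑D) T T - pdsMul (⇑D) V T = U)) := by
  have hVu : ∀ i : ℤ, ((k:ℤ) - 1 < i) → V i = 0 := fun i hi => hV i (Or.inr hi)
  have heqF : ∀ T : ℤ → A,
      ((fun n => Dt (T n)) + pdsMul (⇑D) T T - pdsMul (⇑D) V T = U) →
      ∀ n, Fop D Dt V T n = U n := by
    intro T h n
    show Dt (T n) + pdsMul (⇑D) T T n - pdsMul (⇑D) V T n = U n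
    simpa only [Pi.add_apply, Pi.sub_apply] using congrFun h n
  have heqF' : ∀ T : ℤ → A, (∀ n, Fop D Dt V T n = U n) →
      ((fun n => Dt (T n)) + pdsMul (⇑D) T T - pdsMul (⇑D) V T = U) := by
    intro T h
    funext n
    exact h n
  have hτu : IsUnit τ := isUnit_of_mul_isUnit_left (hτ ▸ hu)
  have h2τ : IsUnit (τ + τ) := by
    rw [show τ + τ = 2 * τ by ring]
    exact h2.mul hτu
  have uniq : ∀ T T' : ℤ → A,
      (∀ j : ℤ, (k:ℤ) < j → T j = 0) → T (k:ℤ) = τ → (∀ n, Fop D Dt V T n = U n) →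
      (∀ j : ℤ, (k:ℤ) < j → T' j = 0) → T' (k:ℤ) = τ → (∀ n, Fop D Dt V T' n = U n) →
      T = T' := by
    intro T T' hT hTk hTe hT' hT'k hT'e
    have claim : ∀ i : ℕ, ∀ j : ℤ, (k:ℤ) - i ≤ j → T j = T' j := by
      intro i
      induction i with
      | zero =>
        intro j hj
        rcases eq_or_lt_of_le (show (k:ℤ) ≤ j by omega) with h | h
        · rw [← h, hTk, hT'k]
        · rw [hT j h, hT' j h]
      | succ i ih =>
        intro j hj
        by_cases h : (k:ℤ) - i ≤ j
        · exact ih j h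
        · have hd := F_diff D Dt k hk V hVu T T' hT hT' j (by omega)
            (fun j' hj' => ih j' (by omega))
          rw [hTe ((k:ℤ) + j), hT'e ((k:ℤ) + j), sub_self, hTk] at hd
          have h0 := (h2τ.mul_right_eq_zero).mp hd.symm
          exact sub_eq_zero.mp h0
    funext j
    by_cases hj : (k:ℤ) < j
    · rw [hT j hj, hT' j hj]
    · exact claim ((k:ℤ) - j).toNat j (by omega)
  obtain ⟨y, hy⟩ := h2τ.exists_right_inv
  have hT0b : ∀ j : ℤ, (k:ℤ) < j → Tsol D Dt V U k τ y j = 0 := by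
    intro j hj
    unfold Tsol
    rw [if_pos hj]
  have hT0k : Tsol D Dt V U k τ y (k:ℤ) = τ :=
    (Tsol_agree D Dt V U k τ y 0 (k:ℤ) (by omega)).trans (seqN_top D Dt V U k τ y 0)
  have hT0e : ∀ n, Fop D Dt V (Tsol D Dt V U k τ y) n = U n := by
    intro n
    rcases lt_trichotomy n (2*(k:ℤ)) with hn | hn | hn
    · set i : ℕ := (2*(k:ℤ) - n - 1).toNat with hi
      have hiv : (i:ℤ) + 1 = 2*(k:ℤ) - n := by omega
      have hQb := seqN_bdd D Dt V U k τ y i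
      have hPb := seqN_bdd D Dt V U k τ y (i+1)
      have hstep : Fop D Dt V (seqN D Dt V U k τ y (i+1)) n = U n := by
        have hag : ∀ j : ℤ, (k:ℤ) - ((i:ℤ)+1) < j →
            seqN D Dt V U k τ y (i+1) j = seqN D Dt V U k τ y i j := by
          intro j hj
          rw [seqN, Function.update_of_ne (by omega)]
        have hd := F_diff D Dt k hk V hVu _ _ hPb hQb ((k:ℤ) - ((i:ℤ)+1)) (by omega) hag
        rw [show (k:ℤ) + ((k:ℤ) - ((i:ℤ)+1)) = n by omega] at hd
        rw [seqN_top] at hd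
        have hPm : seqN D Dt V U k τ y (i+1) ((k:ℤ) - ((i:ℤ)+1))
            = seqN D Dt V U k τ y i ((k:ℤ) - ((i:ℤ)+1)) +
              y * (U (2*(k:ℤ) - ((i:ℤ)+1)) -
                Fop D Dt V (seqN D Dt V U k τ y i) (2*(k:ℤ) - ((i:ℤ)+1))) := by
          rw [seqN, Function.update_self]
        rw [hPm, show 2*(k:ℤ) - ((i:ℤ)+1) = n by omega] at hd
        linear_combination hd + (U n - Fop D Dt V (seqN D Dt V U k τ y i) n) * hy
      rw [← hstep]
      apply F_local D Dt k V hVu _ _ hT0b hPb n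
      intro j hjge
      exact Tsol_agree D Dt V U k τ y (i+1) j (by omega)
    · rw [hn, F_top D Dt k hk V hVu _ hT0b, hT0k]
      exact hτ
    · rw [F_high D Dt k V hVu _ hT0b n hn, hU n (Or.inr hn)]
  refine ⟨?_, ?_⟩
  · intro T hT heq
    have h := heqF T heq (2*(k:ℤ))
    rw [F_top D Dt k hk V hVu T hT] at h
    exact h
  · refine ⟨Tsol D Dt V U k τ y, ⟨hT0b, hT0k, heqF' _ hT0e⟩, ?_⟩
    rintro T' ⟨h1, h2', h3⟩
    exact uniq T' _ h1 h2' (heqF T' h3) hT0b hT0k hT0e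
end
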